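/- Let v ∈ ℂ^p and let M be the (p+2)×(p+2) complex symmetric-block matrix [[0_p, C],[Cᵗ, 0₂]] where C is the p×2 matrix with columns v and i·v. Then trace([M, Mᴴ]²) = 16·‖v‖⁴ − 8·|⟨v, conj(v)⟩|² and trace(MᴴM) = 4·‖v‖²; consequently −trace([M,Mᴴ]²)/(trace(MᴴM))² lies in [−1, −1/2] for all nonzero v. -/
import Mathlib
open Matrix Complex

set_option maxHeartbeats 1000000 in
theorem stmt19 (p : ℕ) (v : Fin p → ℂ) :
    let C : Matrix (Fin p) (Fin 2) ℂ :=
      Matrix.of fun i j => if j = 0 then v i else Complex.I * v i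
    let M : Matrix (Fin p ⊕ Fin 2) (Fin p ⊕ Fin 2) ℂ :=
      Matrix.fromBlocks 0 C Cᵀ 0
    ((M * Mᴴ - Mᴴ * M) * (M * Mᴴ - Mᴴ * M)).trace =
        ((16 * (∑ j, ‖v j‖ ^ 2) ^ 2 - 8 * ‖∑ j, (v j) ^ 2‖ ^ 2 : ℝ) : ℂ) ∧
    (Mᴴ * M).trace = ((4 * ∑ j, ‖v j‖ ^ 2 : ℝ) : ℂ) ∧
    (v ≠ 0 →
      -1 ≤ -(((M * Mᴴ - Mᴴ * M) * (M * Mᴴ - Mᴴ * M)).trace.re) /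
            ((Mᴴ * M).trace.re) ^ 2 ∧
      -(((M * Mᴴ - Mᴴ * M) * (M * Mᴴ - Mᴴ * M)).trace.re) /
            ((Mᴴ * M).trace.re) ^ 2 ≤ -(1 / 2 : ℝ)) := by
  intro C M
  set c := starRingEnd ℂ with hc
  set S : ℂ := ∑ j, v j * c (v j) with hS
  set A : Matrix (Fin p) (Fin p) ℂ :=
    Matrix.of (fun i j => 2 * (v i * c (v j)) - 2 * (c (v i) * v j)) with hA
  set D : Matrix (Fin 2) (Fin 2) ℂ :=
    !![0, -2*Complex.I*S; 2*Complex.I*S, 0] with hD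
  have hX : M * Mᴴ - Mᴴ * M = Matrix.fromBlocks A 0 0 D := by
    ext a b
    cases a with
    | inl i =>
      cases b with
      | inl j =>
        simp [M, C, A, Matrix.mul_apply, Matrix.sub_apply, Fintype.sum_sum_type,
          Fin.sum_univ_two, Matrix.fromBlocks, Matrix.conjTranspose_apply, hc]
        ring_nf
        simp only [Complex.I_sq]
        ring
      | inr k =>
        simp [M, C, Matrix.mul_apply, Matrix.sub_apply, Fintype.sum_sum_type,
          Fin.sum_univ_two, Matrix.fromBlocks, Matrix.conjTranspose_apply]
    | inr k =>
      cases b with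
      | inl j =>
        simp [M, C, Matrix.mul_apply, Matrix.sub_apply, Fintype.sum_sum_type,
          Fin.sum_univ_two, Matrix.fromBlocks, Matrix.conjTranspose_apply]
      | inr l =>
        fin_cases k <;> fin_cases l <;>
          simp [M, C, D, S, Matrix.mul_apply, Matrix.sub_apply, Fintype.sum_sum_type,
            Fin.sum_univ_two, Matrix.fromBlocks, Matrix.conjTranspose_apply, hc,
            Finset.mul_sum] <;>
        · simp only [← Finset.sum_neg_distrib, ← Finset.sum_add_distrib,
            ← Finset.sum_sub_distrib]
          first
          | (apply Finset.sum_eq_zero; intro x _; ring)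
          | (apply Finset.sum_congr rfl; intro x _; ring)
  obtain ⟨T, hT⟩ : ∃ T : ℂ, T = ∑ j, v j ^ 2 := ⟨_, rfl⟩
  obtain ⟨Tc, hTc⟩ : ∃ Tc : ℂ, Tc = ∑ j, c (v j) ^ 2 := ⟨_, rfl⟩
  have hAA : (A * A).trace = 8 * S ^ 2 - 4 * (T * Tc) - 4 * (Tc * T) := by
    rw [hS, hT, hTc]
    simp only [Matrix.trace, Matrix.diag, Matrix.mul_apply, hA, Matrix.of_apply, sq]
    rw [Finset.sum_mul_sum, Finset.sum_mul_sum, Finset.sum_mul_sum]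
    simp only [Finset.mul_sum, ← Finset.sum_sub_distrib]
    apply Finset.sum_congr rfl; intro i _
    apply Finset.sum_congr rfl; intro j _
    ring
  have hDD : (D * D).trace = 8 * S ^ 2 := by
    rw [hD]
    simp [Matrix.trace_fin_two, Matrix.mul_apply, Fin.sum_univ_two]
    ring_nf
    simp only [Complex.I_sq]
    ring
  have htr1 : ((M * Mᴴ - Mᴴ * M) * (M * Mᴴ - Mᴴ * M)).trace
      = 16 * S ^ 2 - 8 * (T * Tc) := by
    rw [hX, Matrix.fromBlocks_multiply]
    simp only [Matrix.mul_zero, Matrix.zero_mul, add_zero, zero_add]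
    rw [show (Matrix.fromBlocks (A*A) 0 0 (D*D)).trace = (A*A).trace + (D*D).trace by
      simp [Matrix.trace, Fintype.sum_sum_type, Matrix.fromBlocks, Matrix.diag]]
    rw [hAA, hDD]; ring
  have hSr : S = ((∑ j, ‖v j‖ ^ 2 : ℝ) : ℂ) := by
    rw [hS]; push_cast
    exact Finset.sum_congr rfl fun j _ => Complex.mul_conj' _
  have hTT : T * Tc = ((‖∑ j, (v j) ^ 2‖ ^ 2 : ℝ) : ℂ) := by
    have hcT : Tc = c T := by
      rw [hT, hTc, map_sum]
      exact Finset.sum_congr rfl fun j _ => (map_pow c (v j) 2).symm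
    rw [hcT, Complex.mul_conj', hT]; push_cast; ring
  have e1 : ((M * Mᴴ - Mᴴ * M) * (M * Mᴴ - Mᴴ * M)).trace =
      ((16 * (∑ j, ‖v j‖ ^ 2) ^ 2 - 8 * ‖∑ j, (v j) ^ 2‖ ^ 2 : ℝ) : ℂ) := by
    rw [htr1]
    rw [hTT, hSr]
    push_cast; ring
  have e2 : (Mᴴ * M).trace = ((4 * ∑ j, ‖v j‖ ^ 2 : ℝ) : ℂ) := by
    have h4 : (Mᴴ * M).trace = 4 * S := by
      simp [M, C, Matrix.trace, Fintype.sum_sum_type, Matrix.mul_apply,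
        Fin.sum_univ_two, Matrix.fromBlocks, Matrix.conjTranspose_apply, hc,
        Matrix.diag]
      rw [hS]
      simp only [Finset.mul_sum, ← Finset.sum_add_distrib, ← Finset.sum_neg_distrib,
        ← Finset.sum_sub_distrib]
      apply Finset.sum_congr rfl; intro x _
      ring_nf
      simp only [Complex.I_sq]
      ring
    rw [h4, hSr]; push_cast; ring
  refine ⟨e1, e2, fun hv => ?_⟩
  rw [e1, e2, Complex.ofReal_re, Complex.ofReal_re]
  obtain ⟨s, hs⟩ : ∃ s : ℝ, s = ∑ j, ‖v j‖ ^ 2 := ⟨_, rfl⟩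
  obtain ⟨h, hh⟩ : ∃ h : ℝ, h = ‖∑ j, (v j) ^ 2‖ ^ 2 := ⟨_, rfl⟩
  rw [← hs, ← hh]
  have hs0 : 0 < s := by
    obtain ⟨j, hj⟩ := Function.ne_iff.mp hv
    have hvj : 0 < ‖v j‖ := norm_pos_iff.mpr hj
    calc (0:ℝ) < ‖v j‖ ^ 2 := by positivity
      _ ≤ s := by
        rw [hs]
        exact Finset.single_le_sum (f := fun i => ‖v i‖ ^ 2)
          (fun i _ => by positivity) (Finset.mem_univ j)
  have hh0 : 0 ≤ h := by rw [hh]; positivity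
  have hhs : h ≤ s ^ 2 := by
    have h1 : ‖∑ j, (v j) ^ 2‖ ≤ s := by
      rw [hs]
      refine (norm_sum_le _ _).trans (le_of_eq ?_)
      exact Finset.sum_congr rfl fun j _ => norm_pow (v j) 2
    rw [hh]
    exact pow_le_pow_left₀ (norm_nonneg _) h1 2
  have hd : (0:ℝ) < (4 * s) ^ 2 := by positivity
  constructor
  · rw [le_div_iff₀ hd]; nlinarith
  · rw [div_le_iff₀ hd]; nlinarith
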